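/- Let (Ω, F, P) be a probability space, m ≥ 2, let μ₀ ∈ ℝ^m lie in the probability simplex Δ_m with every entry strictly positive, and let c ∈ ℝ^m satisfy c_1 > c_2 ≥ … ≥ c_m; set D_2 = c_1 - c_2 > 0. Let Φ_t(j) : Ω → ℝ (t ≥ 1, j ∈ {1,…,m}) be random variables and suppose there is a constant C > 0 such that for every j, every ε > 0, and every t ≥ 1, P(|Φ_t(j) - c_j| ≥ ε) ≤ C/(ε²·t). Define the random Gibbs beliefs μ_t(j) = μ₀_j · exp(t·Φ_t(j)) / (Σ_{j'} μ₀_{j'} · exp(t·Φ_t(j'))). Then for every ε > 0 and every t ≥ 1, with probability at least 1 - m·C/(ε²·t), it holds that |μ_t(1) - 1| ≤ (m-1) · (max_{1≤k≤m} μ₀_k / μ₀_1) · exp((-D_2 + 2ε)·t). -/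
import Mathlib


open MeasureTheory ProbabilityTheory
open scoped ENNReal

/-- Suppose `c_1 > c_2 ≥ … ≥ c_m`, `D_2 = c_1 - c_2 > 0`, and the random
exponents satisfy the Chebyshev-type bound `P(|Φ_t(j) - c_j| ≥ ε) ≤ C/(ε² t)`. Then the
random Gibbs beliefs `μ_t(j) = μ₀_j exp(t Φ_t(j)) / ∑_{j'} μ₀_{j'} exp(t Φ_t(j'))`
satisfy, for every `ε > 0` and `t ≥ 1`, with probability at least `1 - m C/(ε² t)`,
`|μ_t(1) - 1| ≤ (m-1) (max_k μ₀_k / μ₀_1) exp((-D_2 + 2ε) t)`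
(state `j` is represented by the index `⟨j-1, _⟩ : Fin m`). -/
theorem gibbs_learning_rate_high_probability
    {Ω : Type*} [MeasureSpace Ω] [IsProbabilityMeasure (ℙ : Measure Ω)]
    (m : ℕ) (hm : 2 ≤ m) (μ0 : Fin m → ℝ)
    (hμ0 : μ0 ∈ stdSimplex ℝ (Fin m)) (hμ0pos : ∀ j, 0 < μ0 j)
    (c : Fin m → ℝ)
    (hc12 : c ⟨1, by omega⟩ < c ⟨0, by omega⟩)
    (hcmono : ∀ j j' : Fin m, j ≠ ⟨0, by omega⟩ → j ≤ j' → c j' ≤ c j)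
    (D2 : ℝ) (hD2 : D2 = c ⟨0, by omega⟩ - c ⟨1, by omega⟩)
    (Φ : ℕ → Fin m → Ω → ℝ)
    (C : ℝ) (hC : 0 < C)
    (hcheb : ∀ (j : Fin m) (ε : ℝ), 0 < ε → ∀ t : ℕ, 1 ≤ t →
      ℙ {ω | ε ≤ |Φ t j ω - c j|} ≤ ENNReal.ofReal (C / (ε ^ 2 * t)))
    (μ : ℕ → Fin m → Ω → ℝ)
    (hμ : ∀ t j ω, μ t j ω = μ0 j * Real.exp ((t : ℝ) * Φ t j ω) /
      ∑ j', μ0 j' * Real.exp ((t : ℝ) * Φ t j' ω)) :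
    ∀ (ε : ℝ), 0 < ε → ∀ t : ℕ, 1 ≤ t →
      1 - ENNReal.ofReal ((m : ℝ) * C / (ε ^ 2 * t)) ≤
        ℙ {ω | |μ t ⟨0, by omega⟩ ω - 1| ≤
          ((m : ℝ) - 1) *
            ((Finset.univ.sup' (Finset.univ_nonempty_iff.mpr ⟨⟨0, by omega⟩⟩) μ0) /
              μ0 ⟨0, by omega⟩) *
            Real.exp ((-D2 + 2 * ε) * (t : ℝ))} := by

  intro ε hε t ht
  have h0m : 0 < m := by omega
  set i0 : Fin m := ⟨0, by omega⟩ with hi0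
  set i1 : Fin m := ⟨1, by omega⟩ with hi1
  set M : ℝ := Finset.univ.sup' (Finset.univ_nonempty_iff.mpr ⟨⟨0, by omega⟩⟩) μ0 with hMdef
  set B : ℝ := ((m : ℝ) - 1) * (M / μ0 i0) * Real.exp ((-D2 + 2 * ε) * (t : ℝ)) with hBdef
  set A : Fin m → Set Ω := fun j => {ω | ε ≤ |Φ t j ω - c j|} with hA
  have hsub : (⋃ j, A j)ᶜ ⊆ {ω | |μ t i0 ω - 1| ≤ B} := by
    intro ω hω
    simp only [Set.mem_compl_iff, Set.mem_iUnion, not_exists, hA, Set.mem_setOf_eq,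
      not_le] at hω
    set f : Fin m → ℝ := fun j => μ0 j * Real.exp ((t : ℝ) * Φ t j ω) with hf
    have hfpos : ∀ j, 0 < f j := fun j => mul_pos (hμ0pos j) (Real.exp_pos _)
    have hSpos : 0 < ∑ j', f j' :=
      Finset.sum_pos (fun j _ => hfpos j) ⟨i0, Finset.mem_univ _⟩
    have hsplit : ∑ j', f j' = f i0 + ∑ j ∈ Finset.univ.erase i0, f j :=
      (Finset.add_sum_erase _ f (Finset.mem_univ i0)).symm
    have hEnn : 0 ≤ ∑ j ∈ Finset.univ.erase i0, f j :=
      Finset.sum_nonneg fun j _ => (hfpos j).le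
    have hmu : μ t i0 ω = f i0 / ∑ j', f j' := hμ t i0 ω
    have hdiff : μ t i0 ω - 1 = -((∑ j ∈ Finset.univ.erase i0, f j) / ∑ j', f j') := by
      rw [hmu]
      field_simp
      try linarith [hsplit]
    have habs : |μ t i0 ω - 1| = (∑ j ∈ Finset.univ.erase i0, f j) / ∑ j', f j' := by
      rw [hdiff, abs_neg, abs_of_nonneg (div_nonneg hEnn hSpos.le)]
    have hle1 : (∑ j ∈ Finset.univ.erase i0, f j) / ∑ j', f j' ≤
        (∑ j ∈ Finset.univ.erase i0, f j) / f i0 := by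
      apply div_le_div_of_nonneg_left hEnn (hfpos i0)
      rw [hsplit]; linarith
    have hterm : ∀ j ∈ Finset.univ.erase i0,
        f j / f i0 ≤ (M / μ0 i0) * Real.exp ((-D2 + 2 * ε) * (t : ℝ)) := by
      intro j hj
      have hjne : j ≠ i0 := Finset.ne_of_mem_erase hj
      have hj1 : (1 : ℕ) ≤ j.val := by
        rcases Nat.eq_zero_or_pos j.val with h | h
        · exact absurd (Fin.ext (by simp [hi0, h])) hjne
        · exact h
      have hi1le : i1 ≤ j := by
        rw [Fin.le_def]; simpa [hi1] using hj1
      have hi1ne : i1 ≠ i0 := fun h => by simpa [hi1, hi0] using congrArg Fin.val h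
      have hcj : c j ≤ c i1 := hcmono i1 j hi1ne hi1le
      have hΦj := abs_lt.mp (hω j)
      have hΦ0 := abs_lt.mp (hω i0)
      have htpos : (0 : ℝ) < t := by positivity
      have hexp : (t : ℝ) * Φ t j ω - (t : ℝ) * Φ t i0 ω ≤ (-D2 + 2 * ε) * (t : ℝ) := by
        have h1 : Φ t j ω ≤ c j + ε := by linarith [hΦj.2]
        have h2 : c i0 - ε ≤ Φ t i0 ω := by linarith [hΦ0.1]
        have := mul_le_mul_of_nonneg_left h1 htpos.le
        have := mul_le_mul_of_nonneg_left h2 htpos.le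
        nlinarith [hD2, hcj]
      have hfj : f j / f i0 = (μ0 j / μ0 i0) *
          Real.exp ((t : ℝ) * Φ t j ω - (t : ℝ) * Φ t i0 ω) := by
        rw [hf]
        rw [Real.exp_sub]
        rw [mul_div_mul_comm]
      rw [hfj]
      have hμj : μ0 j ≤ M := Finset.le_sup' μ0 (Finset.mem_univ j)
      have hMp : 0 ≤ M / μ0 i0 :=
        div_nonneg ((hμ0pos i0).le.trans (Finset.le_sup' μ0 (Finset.mem_univ i0)))
          (hμ0pos i0).le
      exact mul_le_mul ((div_le_div_iff_of_pos_right (hμ0pos i0)).mpr hμj)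
        (Real.exp_le_exp.mpr hexp) (Real.exp_nonneg _) hMp
    have hle2 : (∑ j ∈ Finset.univ.erase i0, f j) / f i0 ≤ B := by
      rw [Finset.sum_div]
      calc ∑ j ∈ Finset.univ.erase i0, f j / f i0
          ≤ (Finset.univ.erase i0).card •
            ((M / μ0 i0) * Real.exp ((-D2 + 2 * ε) * (t : ℝ))) :=
            Finset.sum_le_card_nsmul _ _ _ hterm
        _ = B := by
            rw [Finset.card_erase_of_mem (Finset.mem_univ i0), Finset.card_univ,
              Fintype.card_fin, nsmul_eq_mul, hBdef, Nat.cast_sub (by omega : 1 ≤ m)]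
            push_cast
            ring
    calc |μ t i0 ω - 1| = _ := habs
      _ ≤ _ := hle1
      _ ≤ B := hle2
  have hunion : ℙ (⋃ j, A j) ≤ ENNReal.ofReal ((m : ℝ) * C / (ε ^ 2 * t)) := by
    calc ℙ (⋃ j, A j) ≤ ∑ j : Fin m, ℙ (A j) := measure_iUnion_fintype_le _ _
      _ ≤ ∑ _j : Fin m, ENNReal.ofReal (C / (ε ^ 2 * t)) :=
          Finset.sum_le_sum fun j _ => hcheb j ε hε t ht
      _ = (m : ℝ≥0∞) * ENNReal.ofReal (C / (ε ^ 2 * t)) := by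
          rw [Finset.sum_const, Finset.card_univ, Fintype.card_fin, nsmul_eq_mul]
      _ = ENNReal.ofReal ((m : ℝ) * C / (ε ^ 2 * t)) := by
          rw [mul_div_assoc, ENNReal.ofReal_mul (by positivity : (0:ℝ) ≤ (m:ℝ))]
          rw [ENNReal.ofReal_natCast]
  have hcompl : 1 - ℙ (⋃ j, A j) ≤ ℙ ((⋃ j, A j)ᶜ) := by
    have h1 : (1 : ℝ≥0∞) = ℙ (Set.univ : Set Ω) := (measure_univ).symm
    have h2 : ℙ (Set.univ : Set Ω) ≤ ℙ (⋃ j, A j) + ℙ ((⋃ j, A j)ᶜ) := by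
      rw [← Set.union_compl_self (⋃ j, A j)]
      exact measure_union_le _ _
    rw [h1]
    exact tsub_le_iff_left.mpr h2
  calc 1 - ENNReal.ofReal ((m : ℝ) * C / (ε ^ 2 * t))
      ≤ 1 - ℙ (⋃ j, A j) := tsub_le_tsub_left hunion 1
    _ ≤ ℙ ((⋃ j, A j)ᶜ) := hcompl
    _ ≤ _ := measure_mono hsub
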